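/- arXiv:1411.0562 — 4 statements merged into one kernel-verified Lean document; each statement's English description precedes it below -/
import Mathlib

section
/- Let λ/μ be a skew diagram (a finite subset of ℤ × ℤ_{>0} satisfying: if nonempty there is j with (j,1) ∈ λ/μ, and if (i,j) ∉ λ/μ then either (i',j') ∉ λ/μ for all i' ≥ i, j' ≥ j, or (i',j') ∉ λ/μ for all i' ≤ i, j' ≤ j). If λ/μ contains a rectangle of size (2N+1) × 2 (i.e., there exist i, j such that (i+r, j), (i+r, j+1) ∈ λ/μ for all 0 ≤ r ≤ 2N), then there exists no skew tableau of shape λ/μ with values in the alphabet A = {1 < ... < N < 0 < N̄ < ... < 1̄} satisfying the rules (H) and (V). -/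
/-- The type-B alphabet `{1,...,N, 0, N̄,...,1̄}`. -/
abbrev Alp (N : ℕ) := Fin N ⊕ (Unit ⊕ Fin N)

/-- The position of a letter in the order `1 < ⋯ < N < 0 < N̄ < ⋯ < 1̄`. -/
def idx {N : ℕ} : Alp N → ℕ
  | Sum.inl i => i
  | Sum.inr (Sum.inl _) => N
  | Sum.inr (Sum.inr j) => 2 * N - j

/-- The letter `0` of the alphabet. -/
def zeroL {N : ℕ} : Alp N := Sum.inr (Sum.inl ())

/-- A skew diagram: a finite subset of `ℤ × ℤ_{>0}` such that if nonempty it meets column 1,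
and satisfying the convexity condition. -/
def IsSkewDiagram (D : Finset (ℤ × ℤ)) : Prop :=
  (∀ p ∈ D, 1 ≤ p.2) ∧
  (D.Nonempty → ∃ i : ℤ, (i, 1) ∈ D) ∧
  (∀ i j : ℤ, (i, j) ∉ D →
    (∀ i' j' : ℤ, i ≤ i' → j ≤ j' → (i', j') ∉ D) ∨
    (∀ i' j' : ℤ, i' ≤ i → j' ≤ j → (i', j') ∉ D))

/-- A skew tableau: the horizontal rule (H) and the vertical rule (V). -/
def IsTableau {N : ℕ} (D : Finset (ℤ × ℤ)) (T : ℤ × ℤ → Alp N) : Prop :=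
  (∀ i j : ℤ, (i, j) ∈ D → (i, j + 1) ∈ D →
      idx (T (i, j)) ≤ idx (T (i, j + 1)) ∧ ¬(T (i, j) = zeroL ∧ T (i, j + 1) = zeroL)) ∧
  (∀ i j : ℤ, (i, j) ∈ D → (i + 1, j) ∈ D →
      idx (T (i, j)) < idx (T (i + 1, j)) ∨ (T (i, j) = zeroL ∧ T (i + 1, j) = zeroL))

lemma idx_le_two_mul {N : ℕ} (a : Alp N) : idx a ≤ 2 * N := by
  rcases a with i | _ | j
  · have := i.isLt; simp [idx]; omega
  · simp [idx]; omega
  · simp [idx]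

lemma idx_zeroL {N : ℕ} : idx (zeroL : Alp N) = N := rfl

lemma eq_zeroL_of_idx_eq {N : ℕ} (a : Alp N) (h : idx a = N) (hN : 1 ≤ N) : a = zeroL := by
  rcases a with i | u | j
  · have := i.isLt; simp [idx] at h; omega
  · rfl
  · have := j.isLt; simp [idx] at h; omega

/-- In a column of height `2N+1`, the middle entry is `0`. -/
lemma middle_zero {N : ℕ} (hN : 1 ≤ N) (D : Finset (ℤ × ℤ)) (T : ℤ × ℤ → Alp N)
    (hV : ∀ i j : ℤ, (i, j) ∈ D → (i + 1, j) ∈ D →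
      idx (T (i, j)) < idx (T (i + 1, j)) ∨ (T (i, j) = zeroL ∧ T (i + 1, j) = zeroL))
    (i c : ℤ) (hcol : ∀ r : ℤ, 0 ≤ r → r ≤ 2 * N → (i + r, c) ∈ D) :
    T (i + N, c) = zeroL := by
  have low : ∀ r : ℕ, r ≤ N → r ≤ idx (T (i + (r : ℤ), c)) := by
    intro r
    induction r with
    | zero => intro _; exact Nat.zero_le _
    | succ k ih =>
      intro hk
      have hk' := ih (by omega)
      have h1 : (i + (k : ℤ), c) ∈ D := hcol k (by positivity) (by push_cast; omega)
      have h2 : (i + (k : ℤ) + 1, c) ∈ D := by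
        have := hcol (k + 1) (by positivity) (by push_cast; omega)
        rwa [show i + ((k : ℤ) + 1) = i + (k : ℤ) + 1 from by ring] at this
      have heq : (i + ((k : ℤ) + 1), c) = (i + (k : ℤ) + 1, c) := by
        ring_nf
      push_cast
      rw [heq]
      rcases hV (i + (k : ℤ)) c h1 h2 with h | ⟨_, h⟩
      · omega
      · rw [h, idx_zeroL]; omega
  have high : ∀ r : ℕ, r ≤ N → idx (T (i + (2 * N - r : ℤ), c)) ≤ 2 * N - r := by
    intro r
    induction r with
    | zero =>
      intro _
      simpa using idx_le_two_mul (T (i + (2 * N : ℤ), c))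
    | succ k ih =>
      intro hk
      have hk' := ih (by omega)
      have h1 : (i + (2 * N - (k + 1) : ℤ), c) ∈ D := by
        refine hcol _ (by push_cast; omega) (by push_cast; omega)
      have h2 : (i + (2 * N - (k + 1) : ℤ) + 1, c) ∈ D := by
        have := hcol (2 * N - k : ℤ) (by push_cast; omega) (by push_cast; omega)
        rw [show i + (2 * (N : ℤ) - ((k : ℤ) + 1)) + 1 = i + (2 * (N : ℤ) - (k : ℤ)) from by ring]
        exact this
      have heq : (i + (2 * N - (k : ℤ)), c) = (i + (2 * N - ((k : ℤ) + 1)) + 1, c) := by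
        ring_nf
      rcases hV (i + (2 * N - ((k : ℤ) + 1))) c h1 h2 with h | ⟨h, _⟩
      · rw [heq] at hk'
        push_cast
        omega
      · push_cast
        rw [h, idx_zeroL]
        omega
  have hlo := low N le_rfl
  have hhi := high N le_rfl
  have heq2 : (i + (2 * N - (N : ℤ)), c) = (i + (N : ℤ), c) := by ring_nf
  rw [heq2] at hhi
  exact eq_zeroL_of_idx_eq _ (by omega) hN

theorem stmt6 (N : ℕ) (hN : 1 ≤ N) (D : Finset (ℤ × ℤ)) (hD : IsSkewDiagram D)
    (hrect : ∃ i j : ℤ, ∀ r : ℤ, 0 ≤ r → r ≤ 2 * N →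
      (i + r, j) ∈ D ∧ (i + r, j + 1) ∈ D) :
    ¬ ∃ T : ℤ × ℤ → Alp N, IsTableau D T := by
  rintro ⟨T, hH, hV⟩
  obtain ⟨i, j, hrect⟩ := hrect
  have hz1 : T (i + N, j) = zeroL :=
    middle_zero hN D T hV i j (fun r h0 h2 => (hrect r h0 h2).1)
  have hz2 : T (i + N, j + 1) = zeroL :=
    middle_zero hN D T hV i (j + 1) (fun r h0 h2 => (hrect r h0 h2).2)
  have hm := hrect N (by positivity) (by omega)
  exact (hH (i + N) j hm.1 hm.2).2 ⟨hz1, hz2⟩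
end

section
/- Let (i,k) ∈ X with i < N and let p ∈ P_{i,k} be given by a pair (a, ā) with a ∈ P_{N, k-(2N-2i-1)} and ā ∈ P_{N, k+(2N-2i-1)}, and the joining condition a_N - ā_N = (0, y) with y > 0. Write a = ((x_r, y_r)), ā = ((x̄_r, ȳ_r)). Define S_p = {r : 1 ≤ r ≤ N, y_r - y_{r-1} < 0} and S̄_p = {r̄ : 1 ≤ r ≤ N, ȳ_r - ȳ_{r-1} > 0}. Then #S_p + #S̄_p ≤ i. -/
open scoped Classical

/-- A "half path" in `𝒫_{N,k}`: the sequence of heights `y_0, …, y_N` of a path, with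
`y_0 = k + 2N - 1`, steps `±2` for `0 ≤ j ≤ N-2`, and a final step `±(1+ε)`. -/
structure HalfPath (N : ℕ) (ε : ℝ) (k : ℤ) where
  y : ℕ → ℝ
  h0 : y 0 = (k : ℝ) + 2 * N - 1
  hstep : ∀ j : ℕ, j + 1 ≤ N - 1 → y (j + 1) - y j = 2 ∨ y (j + 1) - y j = -2
  hlast : y N - y (N - 1) = 1 + ε ∨ y N - y (N - 1) = -(1 + ε)

lemma card_eq_aux (N : ℕ) (P : ℕ → Prop) :
    Nat.card {r : ℕ // 1 ≤ r ∧ r ≤ N ∧ P r} = ((Finset.Icc 1 N).filter P).card := by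
  have e : {r : ℕ // 1 ≤ r ∧ r ≤ N ∧ P r} ≃ {r : ℕ // r ∈ (Finset.Icc 1 N).filter P} :=
    Equiv.subtypeEquivRight (by intro r; simp [Finset.mem_filter, Finset.mem_Icc, and_assoc])
  rw [Nat.card_congr e, Nat.card_eq_fintype_card, Fintype.card_coe]

lemma icc_succ (n : ℕ) : Finset.Icc 1 (n + 1) = insert (n + 1) (Finset.Icc 1 n) := by
  ext x; simp [Finset.mem_Icc, Finset.mem_insert]; omega

lemma down_count {N : ℕ} {ε : ℝ} {k : ℤ} (h : HalfPath N ε k) :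
    ∀ n, n ≤ N - 1 →
      h.y n = h.y 0 + 2 * n -
        4 * (((Finset.Icc 1 n).filter (fun r => h.y r - h.y (r - 1) < 0)).card : ℝ) := by
  intro n
  induction n with
  | zero => intro _; simp
  | succ n ih =>
    intro hn
    have hy := ih (le_trans (Nat.le_succ n) hn)
    have hstep := h.hstep n hn
    have hnm : n + 1 ∉ Finset.Icc 1 n := by simp
    rcases hstep with hu | hd
    · have : ((Finset.Icc 1 (n + 1)).filter (fun r => h.y r - h.y (r - 1) < 0)).card =
          ((Finset.Icc 1 n).filter (fun r => h.y r - h.y (r - 1) < 0)).card := by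
        rw [icc_succ, Finset.filter_insert, if_neg (by simp; linarith)]
      rw [this]; push_cast; linarith
    · have : ((Finset.Icc 1 (n + 1)).filter (fun r => h.y r - h.y (r - 1) < 0)).card =
          ((Finset.Icc 1 n).filter (fun r => h.y r - h.y (r - 1) < 0)).card + 1 := by
        rw [icc_succ, Finset.filter_insert, if_pos (by simp; linarith),
          Finset.card_insert_of_notMem (fun hx => hnm (Finset.mem_of_mem_filter _ hx))]
      rw [this]; push_cast; linarith

lemma up_count {N : ℕ} {ε : ℝ} {k : ℤ} (h : HalfPath N ε k) :
    ∀ n, n ≤ N - 1 →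
      h.y n = h.y 0 - 2 * n +
        4 * (((Finset.Icc 1 n).filter (fun r => 0 < h.y r - h.y (r - 1))).card : ℝ) := by
  intro n
  induction n with
  | zero => intro _; simp
  | succ n ih =>
    intro hn
    have hy := ih (le_trans (Nat.le_succ n) hn)
    have hstep := h.hstep n hn
    have hnm : n + 1 ∉ Finset.Icc 1 n := by simp
    rcases hstep with hu | hd
    · have : ((Finset.Icc 1 (n + 1)).filter (fun r => 0 < h.y r - h.y (r - 1))).card =
          ((Finset.Icc 1 n).filter (fun r => 0 < h.y r - h.y (r - 1))).card + 1 := by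
        rw [icc_succ, Finset.filter_insert, if_pos (by simp; linarith),
          Finset.card_insert_of_notMem (fun hx => hnm (Finset.mem_of_mem_filter _ hx))]
      rw [this]; push_cast; linarith
    · have : ((Finset.Icc 1 (n + 1)).filter (fun r => 0 < h.y r - h.y (r - 1))).card =
          ((Finset.Icc 1 n).filter (fun r => 0 < h.y r - h.y (r - 1))).card := by
        rw [icc_succ, Finset.filter_insert, if_neg (by simp; linarith)]
      rw [this]; push_cast; linarith

lemma split_last (M : ℕ) (hM : 1 ≤ M) (P : ℕ → Prop) :
    ((Finset.Icc 1 M).filter P).card =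
      ((Finset.Icc 1 (M - 1)).filter P).card + (if P M then 1 else 0) := by
  obtain ⟨m, rfl⟩ : ∃ m, M = m + 1 := ⟨M - 1, by omega⟩
  simp only [Nat.add_sub_cancel]
  rw [icc_succ, Finset.filter_insert]
  split
  · rw [Finset.card_insert_of_notMem (fun hx => by
      have := Finset.mem_of_mem_filter _ hx
      simp [Finset.mem_Icc] at this)]
  · rfl

/-- Lemma 6.1 (second inequality): for a path `p ∈ 𝒫_{i,k}` with `i < N`, given by halves
`a ∈ 𝒫_{N,k-(2N-2i-1)}`, `ā ∈ 𝒫_{N,k+(2N-2i-1)}` joined with `a_N` strictly above `ā_N`,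
one has `#S_p + #S̄_p ≤ i`. -/
theorem stmt9 (N : ℕ) (hN : 2 ≤ N) (i : ℕ) (hi1 : 1 ≤ i) (hiN : i < N)
    (ε : ℝ) (hε : 0 < ε ∧ ε < 1 / 2) (k : ℤ) (hk : Even k)
    (a : HalfPath N ε (k - (2 * (N : ℤ) - 2 * (i : ℤ) - 1)))
    (abar : HalfPath N ε (k + (2 * (N : ℤ) - 2 * (i : ℤ) - 1)))
    (hjoin : abar.y N < a.y N) :
    Nat.card {r : ℕ // 1 ≤ r ∧ r ≤ N ∧ a.y r - a.y (r - 1) < 0} +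
      Nat.card {r : ℕ // 1 ≤ r ∧ r ≤ N ∧ 0 < abar.y r - abar.y (r - 1)} ≤ i := by
  obtain ⟨hε0, hε2⟩ := hε
  rw [card_eq_aux, card_eq_aux]
  have hN1 : N - 1 + 1 = N := by omega
  have ha := down_count a (N - 1) le_rfl
  have hb := up_count abar (N - 1) le_rfl
  set Da := ((Finset.Icc 1 (N - 1)).filter (fun r => a.y r - a.y (r - 1) < 0)).card with hDa
  set Ua := ((Finset.Icc 1 (N - 1)).filter (fun r => 0 < abar.y r - abar.y (r - 1))).card with hUa
  have hcast : ((N - 1 : ℕ) : ℝ) = (N : ℝ) - 1 := by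
    push_cast [Nat.cast_sub (by omega : 1 ≤ N)]; ring
  have hnm : N ∉ Finset.Icc 1 (N - 1) := by simp [Finset.mem_Icc]; omega
  have ha0 : a.y 0 = (k : ℝ) - (2 * N - 2 * i - 1) + 2 * N - 1 := by
    have := a.h0; push_cast at this ⊢; linarith
  have hb0 : abar.y 0 = (k : ℝ) + (2 * N - 2 * i - 1) + 2 * N - 1 := by
    have := abar.h0; push_cast at this ⊢; linarith
  rw [split_last N (by omega), split_last N (by omega)]
  rw [hcast] at ha hb
  rcases a.hlast with hal | hal <;> rcases abar.hlast with habl | habl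
  · -- a up, abar up
    rw [if_neg (by linarith), if_pos (by linarith)]
    have : (Da : ℝ) + (Ua + 1) < (i : ℝ) + 1 := by linarith
    have : Da + (Ua + 1) < i + 1 := by exact_mod_cast this
    omega
  · -- a up, abar down
    rw [if_neg (by linarith), if_neg (by linarith)]
    have : (Da : ℝ) + Ua < (i : ℝ) + 1 := by linarith
    have : Da + Ua < i + 1 := by exact_mod_cast this
    omega
  · -- a down, abar up
    rw [if_pos (by linarith), if_pos (by linarith)]
    have : ((Da : ℝ) + 1) + (Ua + 1) < (i : ℝ) + 1 := by linarith
    have : (Da + 1) + (Ua + 1) < i + 1 := by exact_mod_cast this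
    omega
  · -- a down, abar down
    rw [if_pos (by linarith), if_neg (by linarith)]
    have : ((Da : ℝ) + 1) + Ua < (i : ℝ) + 1 := by linarith
    have : (Da + 1) + Ua < i + 1 := by exact_mod_cast this
    omega
end

section
/- Let N ≥ 2 and let (i_t, k_t), 1 ≤ t ≤ T, be an extended snake in X. Let 1 ≤ s < T. If k_{s+1} - k_s ≥ 4 + 2i_s + 2i_{s+1} - δ_{N i_s} - δ_{N i_{s+1}} and k_{s+1} - k_s ≡ 2(i_s - i_{s+1}) - δ_{N i_s} - δ_{N i_{s+1}} mod 4, then every path p ∈ P_{i_s, k_s} is strictly above every path p' ∈ P_{i_{s+1}, k_{s+1}}. -/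
/-- The set `X` for type B_N: `(N, k)` with `k` odd, or `(i, k)` with `1 ≤ i < N` and `k` even. -/
def inX (N i : ℕ) (k : ℤ) : Prop := (i = N ∧ Odd k) ∨ (1 ≤ i ∧ i < N ∧ Even k)

/-- Kronecker delta `δ_{iN}` as an integer. -/
def kd (N i : ℕ) : ℤ := if i = N then 1 else 0

/-- `(i', k')` is in snake position to `(i, k)` (condition (i)). -/
def SnakePos (N i : ℕ) (k : ℤ) (i' : ℕ) (k' : ℤ) : Prop :=
  k' - k ≥ 4 + 2 * |(i' : ℤ) - (i : ℤ)| - kd N i - kd N i' ∧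
  k' - k ≡ 2 * ((i' : ℤ) - (i : ℤ)) - kd N i - kd N i' [ZMOD 4]

/-- `(i', k')` is in extended snake position to `(i, k)`: condition (i) or (ii). -/
def ExtSnakePos (N i : ℕ) (k : ℤ) (i' : ℕ) (k' : ℤ) : Prop :=
  SnakePos N i k i' k' ∨
  k' - k ≥ 2 * (N : ℤ) + 2 + 2 * |(N : ℤ) - (i : ℤ) - (i' : ℤ)| - kd N i - kd N i'

/-- The horizontal coordinate of the `r`-th point of a path in `𝒫_{N,k}`:
`2r` (for `k ≡ 3 mod 4`) or `4N-2-2r` (for `k ≡ 1 mod 4`), with `x_N = 2N-1`. -/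
def xcoord (N : ℕ) (k : ℤ) (r : ℕ) : ℤ :=
  if r = N then 2 * N - 1
  else if k % 4 = 3 then 2 * r else 4 * N - 2 - 2 * r

/-- A path in `𝒫_{i,k}`: for `i = N` a single half path; for `i < N` a pair
`(a, ā)` with `a ∈ 𝒫_{N, k-(2N-2i-1)}`, `ā ∈ 𝒫_{N, k+(2N-2i-1)}` and
`a_N - ā_N = (0, y)` with `y > 0`. -/
inductive BPath (N : ℕ) (ε : ℝ) : ℕ → ℤ → Type where
  | top : (k : ℤ) → HalfPath N ε k → BPath N ε N k
  | pair : (i : ℕ) → (k : ℤ) → i < N →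
      (a : HalfPath N ε (k - (2 * (N : ℤ) - 2 * (i : ℤ) - 1))) →
      (b : HalfPath N ε (k + (2 * (N : ℤ) - 2 * (i : ℤ) - 1))) →
      b.y N < a.y N → BPath N ε i k

/-- The set of points of a path, as pairs (column, height). -/
def BPath.pts {N : ℕ} {ε : ℝ} : {i : ℕ} → {k : ℤ} → BPath N ε i k → Set (ℤ × ℝ)
  | _, _, .top k h => {pt | ∃ r : ℕ, r ≤ N ∧ pt = (xcoord N k r, h.y r)}
  | _, _, .pair i k _ a b _ => {pt | ∃ r : ℕ, r ≤ N ∧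
      (pt = (xcoord N (k - (2 * (N : ℤ) - 2 * (i : ℤ) - 1)) r, a.y r) ∨
       pt = (xcoord N (k + (2 * (N : ℤ) - 2 * (i : ℤ) - 1)) r, b.y r))}

/-- `p` is strictly above `p'`. -/
def StrictlyAbove {N : ℕ} {ε : ℝ} {i i' : ℕ} {k k' : ℤ}
    (p : BPath N ε i k) (p' : BPath N ε i' k') : Prop :=
  ∀ (x : ℤ) (y z : ℝ), (x, y) ∈ p.pts → (x, z) ∈ p'.pts → y < z

namespace Stmt10Aux


variable {N : ℕ} {ε : ℝ} {m : ℤ}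

lemma half_dist (h : HalfPath N ε m) :
    ∀ d r : ℕ, r + d ≤ N - 1 → |h.y (r + d) - h.y r| ≤ 2 * d := by
  intro d
  induction d with
  | zero => intro r _; simp
  | succ d ih =>
    intro r hr
    have h1 := ih r (by omega)
    have h2' : |h.y (r + d + 1) - h.y (r + d)| ≤ 2 := by
      rcases h.hstep (r + d) (by omega) with e | e <;> rw [e] <;> norm_num
    have h3 := abs_sub_le (h.y (r + d + 1)) (h.y (r + d)) (h.y r)
    have : |h.y (r + (d + 1)) - h.y r| ≤ 2 + 2 * d := by
      calc |h.y (r + (d + 1)) - h.y r| ≤ _ := h3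
        _ ≤ 2 + 2 * d := by linarith
    push_cast
    linarith

lemma half_last_abs (h : HalfPath N ε m) (hε : 0 < ε) :
    |h.y N - h.y (N - 1)| ≤ 1 + ε := by
  rcases h.hlast with e | e <;> rw [e]
  · rw [abs_of_pos (by linarith)]
  · rw [abs_neg, abs_of_pos (by linarith)]

lemma half_ub (h : HalfPath N ε m) (r : ℕ) (hr : r ≤ N - 1) :
    h.y r ≤ (m : ℝ) + 2 * N - 1 + 2 * r := by
  have H := half_dist h r 0 (by omega)
  rw [Nat.zero_add] at H
  have := abs_le.1 H
  rw [h.h0] at this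
  linarith [this.2]

lemma half_lb (h : HalfPath N ε m) (r : ℕ) (hr : r ≤ N - 1) :
    (m : ℝ) + 2 * N - 1 - 2 * r ≤ h.y r := by
  have H := half_dist h r 0 (by omega)
  rw [Nat.zero_add] at H
  have := abs_le.1 H
  rw [h.h0] at this
  linarith [this.1]

lemma half_near_end (h : HalfPath N ε m) (hN : 1 ≤ N) (hε : 0 < ε) (r : ℕ) (hr : r ≤ N - 1) :
    |h.y N - h.y r| ≤ 2 * N - 2 * r - 1 + ε := by
  have H := half_dist h (N - 1 - r) r (by omega)
  have hE : r + (N - 1 - r) = N - 1 := by omega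
  rw [hE] at H
  have h2 := half_last_abs h hε
  have h3 := abs_sub_le (h.y N) (h.y (N - 1)) (h.y r)
  have hc : ((N - 1 - r : ℕ) : ℝ) = (N : ℝ) - 1 - r := by
    push_cast [Nat.cast_sub (by omega : r ≤ N - 1), Nat.cast_sub hN]
    ring
  rw [hc] at H
  calc |h.y N - h.y r| ≤ |h.y N - h.y (N-1)| + |h.y (N-1) - h.y r| := h3
    _ ≤ 2 * N - 2 * r - 1 + ε := by linarith

lemma half_ubN (h : HalfPath N ε m) (hN : 1 ≤ N) (hε : 0 < ε) :
    h.y N ≤ (m : ℝ) + 4 * N - 2 + ε := by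
  have h1 := half_ub h (N - 1) le_rfl
  have h2 := abs_le.1 (half_last_abs h hε)
  have hc : ((N - 1 : ℕ) : ℝ) = (N : ℝ) - 1 := by
    push_cast [Nat.cast_sub hN]; ring
  rw [hc] at h1
  linarith [h2.2]

lemma half_lbN (h : HalfPath N ε m) (hN : 1 ≤ N) (hε : 0 < ε) :
    (m : ℝ) - ε ≤ h.y N := by
  have h1 := half_lb h (N - 1) le_rfl
  have h2 := abs_le.1 (half_last_abs h hε)
  have hc : ((N - 1 : ℕ) : ℝ) = (N : ℝ) - 1 := by
    push_cast [Nat.cast_sub hN]; ring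
  rw [hc] at h1
  linarith [h2.1]

def GoodUB (N : ℕ) (ε : ℝ) (f : ℕ → ℝ) (c : ℝ) (hi : Bool) : Prop :=
  (∀ r : ℕ, r ≤ N - 1 → f r ≤ c + (if hi then 4 * (N : ℝ) - 2 - 2 * (r : ℝ) + 2 * ε else 2 * (r : ℝ))) ∧
  f N ≤ c + 2 * N - 1 + ε

def GoodLB (N : ℕ) (ε : ℝ) (f : ℕ → ℝ) (c : ℝ) (hi : Bool) : Prop :=
  (∀ r : ℕ, r ≤ N - 1 → c + (if hi then 4 * (N : ℝ) - 2 - 2 * (r : ℝ) else 2 * (r : ℝ) - 2 * ε) ≤ f r) ∧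
  c + 2 * N - 1 - ε ≤ f N

lemma goodUB_lo (h : HalfPath N ε m) (hN : 1 ≤ N) (hε : 0 < ε) {c : ℝ}
    (hc : (m : ℝ) + 2 * N - 1 ≤ c) : GoodUB N ε h.y c false := by
  constructor
  · intro r hr
    have := half_ub h r hr
    simp only [Bool.false_eq_true, if_false]
    linarith
  · have := half_ubN h hN hε
    linarith

lemma goodUB_hi (h : HalfPath N ε m) (hN : 1 ≤ N) (hε : 0 < ε) {c : ℝ}
    (hE : h.y N ≤ c + 2 * N - 1 + ε) : GoodUB N ε h.y c true := by
  refine ⟨fun r hr => ?_, hE⟩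
  have := abs_le.1 (half_near_end h hN hε r hr)
  simp only [if_true]
  linarith [this.1]

lemma goodLB_hi (h : HalfPath N ε m) (hN : 1 ≤ N) (hε : 0 < ε) {c : ℝ}
    (hc : c + 2 * N - 1 ≤ (m : ℝ)) : GoodLB N ε h.y c true := by
  constructor
  · intro r hr
    have := half_lb h r hr
    simp only [if_true]
    linarith
  · have := half_lbN h hN hε
    linarith

lemma goodLB_lo (h : HalfPath N ε m) (hN : 1 ≤ N) (hε : 0 < ε) {c : ℝ}
    (hE : c + 2 * N - 1 - ε ≤ h.y N) : GoodLB N ε h.y c false := by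
  refine ⟨fun r hr => ?_, hE⟩
  have := abs_le.1 (half_near_end h hN hε r hr)
  simp only [Bool.false_eq_true, if_false]
  linarith [this.2]

lemma compare_lt {N : ℕ} {ε : ℝ} (hN : 2 ≤ N) (hε0 : 0 < ε) (hε1 : ε < 1 / 2)
    {f1 f2 : ℕ → ℝ} {c1 c2 : ℝ} {b1 b2 : Bool}
    (hgap : c1 + 2 ≤ c2)
    (hU : GoodUB N ε f1 c1 b1) (hL : GoodLB N ε f2 c2 b2)
    (r : ℕ) (hr : r ≤ N)
    (hexc : b1 = true → b2 = false → r = N) :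
    f1 r < f2 r := by
  rcases eq_or_ne r N with hrN | hrN
  · subst hrN
    have := hU.2
    have := hL.2
    linarith
  · have hr1 : r ≤ N - 1 := by omega
    have hrr : (r : ℝ) ≤ (N : ℝ) - 1 := by
      have h1 : (r : ℝ) ≤ ((N - 1 : ℕ) : ℝ) := by exact_mod_cast hr1
      have h2 : ((N - 1 : ℕ) : ℝ) = (N : ℝ) - 1 := by
        push_cast [Nat.cast_sub (by omega : 1 ≤ N)]; ring
      linarith [h2 ▸ h1]
    have h1 := hU.1 r hr1
    have h2 := hL.1 r hr1
    cases b1 <;> cases b2 <;>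
      simp only [Bool.false_eq_true, if_false, if_true] at h1 h2
    · linarith
    · linarith
    · exact absurd (hexc rfl rfl) hrN
    · linarith

lemma xcoord_eq {N : ℕ} (hN : 1 ≤ N) (m1 m2 : ℤ) (r r' : ℕ) (hr : r ≤ N) (hr' : r' ≤ N)
    (hx : xcoord N m1 r = xcoord N m2 r') :
    r = r' ∧ (r = N ∨ ((m1 % 4 = 3) ↔ (m2 % 4 = 3))) := by
  unfold xcoord at hx
  split_ifs at hx <;> omega

lemma dir_ne (m1 m2 : ℤ) (hodd : m1 % 2 = 1) (hmod : (m2 - m1) % 4 = 2) :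
    ¬((m1 % 4 = 3) ↔ (m2 % 4 = 3)) := by omega


lemma left_bound {N : ℕ} {ε : ℝ} {i : ℕ} {k : ℤ} (hN : 1 ≤ N) (hε0 : 0 < ε)
    (p : BPath N ε i k) {x : ℤ} {y : ℝ} (hy : (x, y) ∈ p.pts) :
    ∃ (m : ℤ) (r : ℕ) (b1 : Bool) (f : ℕ → ℝ), r ≤ N ∧ x = xcoord N m r ∧ y = f r ∧
      GoodUB N ε f ((k : ℝ) + 2 * (i : ℝ)) b1 ∧
      (b1 = true → i < N ∧ m = k + (2 * (N : ℤ) - 2 * (i : ℤ) - 1)) := by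
  cases p with
  | top k h =>
    obtain ⟨r, hr, hpt⟩ := hy
    rw [Prod.mk.injEq] at hpt
    refine ⟨k, r, false, h.y, hr, hpt.1, hpt.2, ?_, by simp⟩
    exact goodUB_lo h hN hε0 (by push_cast; linarith)
  | pair i k hi a b hab =>
    obtain ⟨r, hr, hpt⟩ := hy
    have hUa : GoodUB N ε a.y ((k : ℝ) + 2 * (i : ℝ)) false :=
      goodUB_lo a hN hε0 (le_of_eq (by push_cast; ring))
    rcases hpt with hpt | hpt <;> rw [Prod.mk.injEq] at hpt
    · exact ⟨_, r, false, a.y, hr, hpt.1, hpt.2, hUa, by simp⟩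
    · refine ⟨_, r, true, b.y, hr, hpt.1, hpt.2, ?_, fun _ => ⟨hi, rfl⟩⟩
      exact goodUB_hi b hN hε0 (le_of_lt (lt_of_lt_of_le hab hUa.2))

lemma right_bound {N : ℕ} {ε : ℝ} {i' : ℕ} {k' : ℤ} (hN : 1 ≤ N) (hε0 : 0 < ε)
    (p' : BPath N ε i' k') {x : ℤ} {z : ℝ} (hz : (x, z) ∈ p'.pts) :
    ∃ (m : ℤ) (r : ℕ) (b2 : Bool) (f : ℕ → ℝ), r ≤ N ∧ x = xcoord N m r ∧ z = f r ∧
      GoodLB N ε f ((k' : ℝ) - 2 * (i' : ℝ)) b2 ∧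
      (b2 = false → i' < N ∧ m = k' - (2 * (N : ℤ) - 2 * (i' : ℤ) - 1)) := by
  cases p' with
  | top k h =>
    obtain ⟨r, hr, hpt⟩ := hz
    rw [Prod.mk.injEq] at hpt
    refine ⟨k', r, true, h.y, hr, hpt.1, hpt.2, ?_, by simp⟩
    exact goodLB_hi h hN hε0 (by push_cast; linarith)
  | pair i k hi a b hab =>
    obtain ⟨r, hr, hpt⟩ := hz
    rcases hpt with hpt | hpt <;> rw [Prod.mk.injEq] at hpt
    · refine ⟨_, r, false, a.y, hr, hpt.1, hpt.2, ?_, fun _ => ⟨hi, rfl⟩⟩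
      refine goodLB_lo a hN hε0 ?_
      have h1 := half_lbN b hN hε0
      have h2 : ((k' : ℝ) - 2 * (i' : ℝ)) + 2 * N - 1 - ε ≤ b.y N := by
        push_cast at h1 ⊢; linarith
      linarith [hab]
    · refine ⟨_, r, true, b.y, hr, hpt.1, hpt.2, ?_, by simp⟩
      exact goodLB_hi b hN hε0 (le_of_eq (by push_cast; ring))

end Stmt10Aux

theorem stmt10 (N : ℕ) (hN : 2 ≤ N) (ε : ℝ) (hε : 0 < ε ∧ ε < 1 / 2)
    (T : ℕ) (hT : 1 ≤ T) (iseq : ℕ → ℕ) (kseq : ℕ → ℤ)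
    (hX : ∀ t, 1 ≤ t → t ≤ T → inX N (iseq t) (kseq t))
    (hsnake : ∀ t, 1 ≤ t → t + 1 ≤ T →
      ExtSnakePos N (iseq t) (kseq t) (iseq (t + 1)) (kseq (t + 1)))
    (s : ℕ) (hs : 1 ≤ s) (hsT : s < T)
    (hineq : kseq (s + 1) - kseq s ≥
      4 + 2 * (iseq s : ℤ) + 2 * (iseq (s + 1) : ℤ) - kd N (iseq s) - kd N (iseq (s + 1)))
    (hcong : kseq (s + 1) - kseq s ≡
      2 * ((iseq s : ℤ) - (iseq (s + 1) : ℤ)) - kd N (iseq s) - kd N (iseq (s + 1)) [ZMOD 4])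
    (p : BPath N ε (iseq s) (kseq s)) (p' : BPath N ε (iseq (s + 1)) (kseq (s + 1))) :
    StrictlyAbove p p' := by
  obtain ⟨hε0, hε1⟩ := hε
  have hN1 : 1 ≤ N := by omega
  intro x y z hy hz
  obtain ⟨m1, r, b1, f1, hr, hx1, hy1, hU, hB1⟩ := Stmt10Aux.left_bound hN1 hε0 p hy
  obtain ⟨m2, r', b2, f2, hr', hx2, hz1, hL, hB2⟩ := Stmt10Aux.right_bound hN1 hε0 p' hz
  obtain ⟨hrr, hdir⟩ := Stmt10Aux.xcoord_eq hN1 m1 m2 r r' hr hr' (hx1.symm.trans hx2)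
  subst hrr
  have hkds : kd N (iseq s) = 0 ∨ kd N (iseq s) = 1 := by unfold kd; split <;> simp
  have hkds1 : kd N (iseq (s + 1)) = 0 ∨ kd N (iseq (s + 1)) = 1 := by
    unfold kd; split <;> simp
  have hgapZ : kseq s + 2 * (iseq s : ℤ) + 2 ≤ kseq (s + 1) - 2 * (iseq (s + 1) : ℤ) := by
    omega
  have hgapR : ((kseq s + 2 * (iseq s : ℤ) + 2 : ℤ) : ℝ) ≤
      ((kseq (s + 1) - 2 * (iseq (s + 1) : ℤ) : ℤ) : ℝ) := by exact_mod_cast hgapZ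
  have hgap : ((kseq s : ℝ) + 2 * (iseq s : ℝ)) + 2 ≤ (kseq (s + 1) : ℝ) - 2 * (iseq (s + 1) : ℝ) := by
    push_cast at hgapR
    linarith
  rw [hy1, hz1]
  refine Stmt10Aux.compare_lt hN hε0 hε1 hgap hU hL r hr ?_
  intro hb1 hb2
  obtain ⟨hiN, hm1⟩ := hB1 hb1
  obtain ⟨hi'N, hm2⟩ := hB2 hb2
  rcases hdir with h | hiff
  · exact h
  · exfalso
    subst hm1
    subst hm2
    have hev : kseq s % 2 = 0 := by
      rcases hX s hs hsT.le with ⟨h1, _⟩ | ⟨_, _, he⟩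
      · omega
      · exact Int.even_iff.mp he
    have hev' : kseq (s + 1) % 2 = 0 := by
      rcases hX (s + 1) (by omega) (by omega) with ⟨h1, _⟩ | ⟨_, _, he⟩
      · omega
      · exact Int.even_iff.mp he
    have hk0 : kd N (iseq s) = 0 := by unfold kd; rw [if_neg (by omega)]
    have hk0' : kd N (iseq (s + 1)) = 0 := by unfold kd; rw [if_neg (by omega)]
    rw [hk0, hk0'] at hcong
    unfold Int.ModEq at hcong
    have hodd : (kseq s + (2 * (N : ℤ) - 2 * (iseq s : ℤ) - 1)) % 2 = 1 := by omega
    have hmod : ((kseq (s + 1) - (2 * (N : ℤ) - 2 * (iseq (s + 1) : ℤ) - 1)) -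
        (kseq s + (2 * (N : ℤ) - 2 * (iseq s : ℤ) - 1))) % 4 = 2 := by omega
    exact Stmt10Aux.dir_ne _ _ hodd hmod hiff
end

section
/- Let λ/μ be a non-generic super skew diagram (a super skew diagram with at least one column j such that #{i : (i,j) ∈ λ/μ and (i,j+1) ∈ λ/μ} = 2N). Define the closely-related diagram λ'/μ' by the surgery described below. Then λ'/μ' is again a super skew diagram, has exactly one fewer non-empty column than λ/μ, exactly 2N-1 fewer boxes, and exactly one fewer non-generic column. -/
/-- The number of rows shared by columns `j` and `j+1` of `D`. -/
def sharedCard (D : Finset (ℤ × ℤ)) (j : ℤ) : ℕ :=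
  (D.filter (fun b => b.2 = j ∧ (b.1, j + 1) ∈ D)).card

/-- A super skew diagram: adjacent columns share at most `2N` rows. -/
def IsSuper (N : ℕ) (D : Finset (ℤ × ℤ)) : Prop := ∀ j : ℤ, sharedCard D j ≤ 2 * N

/-- A generic (super) skew diagram: adjacent columns share fewer than `2N` rows. -/
def IsGeneric (N : ℕ) (D : Finset (ℤ × ℤ)) : Prop := ∀ j : ℤ, sharedCard D j < 2 * N

/-- The set of row indices of the boxes in column `j`. -/
def col (D : Finset (ℤ × ℤ)) (j : ℤ) : Finset ℤ := (D.filter (fun b => b.2 = j)).image Prod.fst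

/-- The top box `t_j` of column `j` (junk value `0` if the column is empty). -/
def topBox (D : Finset (ℤ × ℤ)) (j : ℤ) : ℤ := (col D j).min.untopD 0

/-- The length `l_j` of column `j`. -/
def colLen (D : Finset (ℤ × ℤ)) (j : ℤ) : ℕ := (col D j).card

/-- The closely-related diagram `λ'/μ'`:
`{(i,j) ∈ D : j ≤ j'} ∪ {(t_{j'} - r, j') : 1 ≤ r ≤ l_{j'+1} - 2N + 1}
∪ {(i-1, j-1) : (i,j) ∈ D, j > j'+1}`. -/
def surgery (N : ℕ) (D : Finset (ℤ × ℤ)) (j' : ℤ) : Finset (ℤ × ℤ) :=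
  (D.filter (fun b => b.2 ≤ j')) ∪
    ((Finset.Icc 1 (colLen D (j' + 1) - 2 * N + 1)).image
      (fun r : ℕ => (topBox D j' - (r : ℤ), j'))) ∪
    ((D.filter (fun b => j' + 1 < b.2)).image (fun b => (b.1 - 1, b.2 - 1)))

/-- The finset of non-generic columns of `D`. -/
def nonGenCols (N : ℕ) (D : Finset (ℤ × ℤ)) : Finset ℤ :=
  (D.image Prod.snd).filter (fun j => sharedCard D j = 2 * N)

lemma mem_col {D : Finset (ℤ × ℤ)} {i j : ℤ} : i ∈ col D j ↔ (i, j) ∈ D := by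
  simp only [col, Finset.mem_image, Finset.mem_filter]
  constructor
  · rintro ⟨⟨x, y⟩, ⟨hx, rfl⟩, rfl⟩; exact hx
  · intro h; exact ⟨(i, j), ⟨h, rfl⟩, rfl⟩

lemma rect {D : Finset (ℤ × ℤ)} (hD : IsSkewDiagram D) {i1 j1 i2 j2 i j : ℤ}
    (h1 : (i1, j1) ∈ D) (h2 : (i2, j2) ∈ D)
    (ha : i1 ≤ i) (hb : i ≤ i2) (hc : j1 ≤ j) (hd : j ≤ j2) : (i, j) ∈ D := by
  by_contra h
  rcases hD.2.2 i j h with h' | h'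
  · exact h' i2 j2 hb hd h2
  · exact h' i1 j1 ha hc h1

lemma row_ge_top {D : Finset (ℤ × ℤ)} (hD : IsSkewDiagram D) {j1 j2 i : ℤ}
    (h : (col D j2).Nonempty) (hle : j1 ≤ j2) (hi : (i, j1) ∈ D) :
    (col D j2).min' h ≤ i := by
  by_contra hc
  push_neg at hc
  have hm : (i, j2) ∈ D := rect hD hi (mem_col.1 ((col D j2).min'_mem h)) le_rfl hc.le hle le_rfl
  exact absurd (Finset.min'_le _ _ (mem_col.2 hm)) (not_le.2 hc)

lemma row_le_bot {D : Finset (ℤ × ℤ)} (hD : IsSkewDiagram D) {j1 j2 i : ℤ}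
    (h : (col D j1).Nonempty) (hle : j1 ≤ j2) (hi : (i, j2) ∈ D) :
    i ≤ (col D j1).max' h := by
  by_contra hc
  push_neg at hc
  have hm : (i, j1) ∈ D := rect hD (mem_col.1 ((col D j1).max'_mem h)) hi hc.le le_rfl le_rfl hle
  exact absurd (Finset.le_max' _ _ (mem_col.2 hm)) (not_le.2 hc)

lemma topBox_eq {D : Finset (ℤ × ℤ)} {j : ℤ} (h : (col D j).Nonempty) :
    topBox D j = (col D j).min' h := by
  rw [topBox, ← Finset.coe_min' h]
  rfl

theorem stmt16 (N : ℕ) (hN : 1 ≤ N) (D : Finset (ℤ × ℤ)) (hD : IsSkewDiagram D)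
    (hsuper : IsSuper N D) (j' : ℤ) (hng : sharedCard D j' = 2 * N)
    (hmax : ∀ j : ℤ, j' < j → sharedCard D j < 2 * N) :
    IsSkewDiagram (surgery N D j') ∧ IsSuper N (surgery N D j') ∧
    ((surgery N D j').image Prod.snd).card + 1 = (D.image Prod.snd).card ∧
    (surgery N D j').card + (2 * N - 1) = D.card ∧
    (nonGenCols N (surgery N D j')).card + 1 = (nonGenCols N D).card := by
  -- a shared box
  obtain ⟨⟨i0, j0⟩, hi0⟩ : (D.filter (fun b => b.2 = j' ∧ (b.1, j' + 1) ∈ D)).Nonempty := by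
    rw [← Finset.card_pos, ← sharedCard, hng]; omega
  simp only [Finset.mem_filter] at hi0
  have hi0D : (i0, j') ∈ D := by have h := hi0.1; rwa [hi0.2.1] at h
  have hi0D' : (i0, j' + 1) ∈ D := hi0.2.2
  have hc0 : (col D j').Nonempty := ⟨i0, mem_col.2 hi0D⟩
  have hc1 : (col D (j' + 1)).Nonempty := ⟨i0, mem_col.2 hi0D'⟩
  set t := (col D j').min' hc0 with ht_def
  set b := (col D j').max' hc0 with hb_def
  set s := (col D (j' + 1)).min' hc1 with hs_def
  set b' := (col D (j' + 1)).max' hc1 with hb'_def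
  have ht_mem : (t, j') ∈ D := mem_col.1 ((col D j').min'_mem hc0)
  have hb_mem : (b, j') ∈ D := mem_col.1 ((col D j').max'_mem hc0)
  have hs_mem : (s, j' + 1) ∈ D := mem_col.1 ((col D (j' + 1)).min'_mem hc1)
  have hb'_mem : (b', j' + 1) ∈ D := mem_col.1 ((col D (j' + 1)).max'_mem hc1)
  have ht_min : ∀ i : ℤ, (i, j') ∈ D → t ≤ i := fun i h => Finset.min'_le _ _ (mem_col.2 h)
  have hb_max : ∀ i : ℤ, (i, j') ∈ D → i ≤ b := fun i h => Finset.le_max' _ _ (mem_col.2 h)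
  have hs_min : ∀ i : ℤ, (i, j' + 1) ∈ D → s ≤ i := fun i h => Finset.min'_le _ _ (mem_col.2 h)
  have hb'_max : ∀ i : ℤ, (i, j' + 1) ∈ D → i ≤ b' := fun i h => Finset.le_max' _ _ (mem_col.2 h)
  have hst : s ≤ t := row_ge_top hD hc1 (by omega) ht_mem
  have htb' : t ≤ b' := le_trans (ht_min i0 hi0D) (hb'_max i0 hi0D')
  have hb'b : b' ≤ b := row_le_bot hD hc0 (by omega) hb'_mem
  have htb : t ≤ b := le_trans htb' hb'b
  -- column j' as interval
  have hcolj' : ∀ i : ℤ, (i, j') ∈ D ↔ t ≤ i ∧ i ≤ b := by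
    intro i
    refine ⟨fun h => ⟨ht_min i h, hb_max i h⟩, fun ⟨h1, h2⟩ => rect hD ht_mem hb_mem h1 h2 le_rfl le_rfl⟩
  -- column j'+1 as interval
  have hcolj1 : ∀ i : ℤ, (i, j' + 1) ∈ D ↔ s ≤ i ∧ i ≤ b' := by
    intro i
    refine ⟨fun h => ⟨hs_min i h, hb'_max i h⟩, fun ⟨h1, h2⟩ => rect hD hs_mem hb'_mem h1 h2 le_rfl le_rfl⟩
  -- shared rows of j' are exactly [t, b']
  have hshared_set : D.filter (fun bb => bb.2 = j' ∧ (bb.1, j' + 1) ∈ D)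
      = (Finset.Icc t b').image (fun i => (i, j')) := by
    ext ⟨x, y⟩
    simp only [Finset.mem_filter, Finset.mem_image, Finset.mem_Icc, Prod.mk.injEq]
    constructor
    · rintro ⟨hx, rfl, hx'⟩
      exact ⟨x, ⟨ht_min x hx, hb'_max x hx'⟩, rfl, rfl⟩
    · rintro ⟨i, ⟨h1, h2⟩, rfl, rfl⟩
      refine ⟨(hcolj' i).2 ⟨h1, le_trans h2 hb'b⟩, rfl, (hcolj1 i).2 ⟨le_trans hst h1, h2⟩⟩
  have h2N : (2 * N : ℤ) = b' - t + 1 := by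
    have := hng
    rw [sharedCard, hshared_set, Finset.card_image_of_injective _
      (fun a c h => by simpa using congrArg Prod.fst h), Int.card_Icc] at this
    omega
  have hl : (colLen D (j' + 1) : ℤ) = b' - s + 1 := by
    have hcol : col D (j' + 1) = Finset.Icc s b' := by
      ext i
      rw [mem_col, hcolj1 i, Finset.mem_Icc]
    rw [colLen, hcol, Int.card_Icc]
    omega
  set K : ℕ := colLen D (j' + 1) - 2 * N + 1 with hK_def
  have hK : (K : ℤ) = t - s + 1 := by
    have h1 : 2 * N ≤ colLen D (j' + 1) := by omega
    push_cast [hK_def, Nat.sub_add_comm, h1]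
    omega
  have htop : topBox D j' = t := topBox_eq hc0
  -- membership in the surgery
  have hmem : ∀ i j : ℤ, ((i, j) ∈ surgery N D j') ↔
      ((j ≤ j' ∧ (i, j) ∈ D) ∨ (j = j' ∧ s - 1 ≤ i ∧ i ≤ t - 1) ∨ (j' < j ∧ (i + 1, j + 1) ∈ D)) := by
    intro i j
    simp only [surgery, Finset.mem_union, Finset.mem_filter, Finset.mem_image, Finset.mem_Icc,
      ← hK_def, htop, Prod.mk.injEq]
    constructor
    · rintro ((⟨h1, h2⟩ | ⟨r, ⟨hr1, hr2⟩, rfl, rfl⟩) | ⟨⟨x, y⟩, ⟨hxy, hy⟩, hx1, hy1⟩)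
      · exact Or.inl ⟨h2, h1⟩
      · refine Or.inr (Or.inl ⟨rfl, ?_, ?_⟩) <;>
          [skip; omega] <;>
          · have : (r : ℤ) ≤ (K : ℤ) := by exact_mod_cast hr2
            omega
      · refine Or.inr (Or.inr ⟨by omega, ?_⟩)
        have : x = i + 1 ∧ y = j + 1 := by omega
        rw [← this.1, ← this.2]; exact hxy
    · rintro (⟨h1, h2⟩ | ⟨rfl, h1, h2⟩ | ⟨h1, h2⟩)
      · exact Or.inl (Or.inl ⟨h2, h1⟩)
      · refine Or.inl (Or.inr ⟨(t - i).toNat, ⟨by omega, by omega⟩, by omega, rfl⟩)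
      · exact Or.inr ⟨(i + 1, j + 1), ⟨h2, by omega⟩, by omega, by omega⟩
  -- boxes strictly between s-1 and t-1 in new column j' have right neighbour in D's column j'+1
  have hmidcol : ∀ i : ℤ, s - 1 ≤ i → i ≤ t - 1 → (i + 1, j' + 1) ∈ D := by
    intro i h1 h2
    exact (hcolj1 (i + 1)).2 ⟨by omega, by omega⟩
  -- rectangle closedness of the surgery
  have hSrect : ∀ a c p q i j : ℤ, (a, c) ∈ surgery N D j' → (p, q) ∈ surgery N D j' →
      a ≤ i → i ≤ p → c ≤ j → j ≤ q → (i, j) ∈ surgery N D j' := by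
    intro a c p q i j hQ hP hai hip hcj hjq
    rw [hmem] at hQ hP ⊢
    rcases hQ with ⟨hc, hQD⟩ | ⟨hc, ha1, ha2⟩ | ⟨hc, hQD⟩ <;>
      rcases hP with ⟨hq, hPD⟩ | ⟨hq, hp1, hp2⟩ | ⟨hq, hPD⟩
    · exact Or.inl ⟨by omega, rect hD hQD hPD hai hip hcj hjq⟩
    · exact Or.inl ⟨by omega, rect hD hQD (hmidcol p hp1 hp2) hai (by omega) hcj (by omega)⟩
    · rcases le_or_gt j j' with h | h
      · exact Or.inl ⟨h, rect hD hQD hPD hai (by omega) hcj (by omega)⟩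
      · exact Or.inr (Or.inr ⟨h, rect hD hQD hPD (by omega) (by omega) (by omega) (by omega)⟩)
    · have hq' : q = j' := by omega
      have hj : j = j' := by omega
      rcases lt_or_ge i t with h | h
      · exact Or.inr (Or.inl ⟨hj, by omega, by omega⟩)
      · have hPD' : (p, j') ∈ D := by rwa [hq'] at hPD
        refine Or.inl ⟨by omega, ?_⟩
        have : (i, j') ∈ D := rect hD ht_mem hPD' h hip le_rfl le_rfl
        rwa [hj]
    · exact Or.inr (Or.inl ⟨by omega, by omega, by omega⟩)
    · rcases lt_or_ge j' j with h | h
      · exact Or.inr (Or.inr ⟨h, rect hD hs_mem hPD (by omega) (by omega) (by omega) (by omega)⟩)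
      · have hj : j = j' := by omega
        rcases lt_or_ge i t with h2 | h2
        · exact Or.inr (Or.inl ⟨hj, by omega, by omega⟩)
        · refine Or.inl ⟨by omega, ?_⟩
          have : (i, j') ∈ D := rect hD ht_mem hPD h2 (by omega) le_rfl (by omega)
          rwa [hj]
    · exact absurd hq (by omega)
    · exact absurd hq (by omega)
    · exact Or.inr (Or.inr ⟨by omega, rect hD hQD hPD (by omega) (by omega) (by omega) (by omega)⟩)
  have h1j' : (1 : ℤ) ≤ j' := hD.1 (t, j') ht_mem
  have hskew : IsSkewDiagram (surgery N D j') := by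
    refine ⟨?_, ?_, ?_⟩
    · rintro ⟨x, y⟩ hp
      rw [hmem] at hp
      rcases hp with ⟨h, hd⟩ | ⟨h, _⟩ | ⟨h, hd⟩
      · exact hD.1 _ hd
      · simp only; omega
      · simp only; omega
    · intro _
      obtain ⟨i, hi⟩ := hD.2.1 ⟨(t, j'), ht_mem⟩
      exact ⟨i, (hmem i 1).2 (Or.inl ⟨h1j', hi⟩)⟩
    · intro i j hnot
      by_contra hcon
      push_neg at hcon
      obtain ⟨⟨p, q, hip, hjq, hP⟩, ⟨a, c, hai, hcj, hQ⟩⟩ := hcon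
      exact hnot (hSrect a c p q i j hQ hP hai hip hcj hjq)
  -- shared cards to the left of j' are unchanged
  have hsheq : ∀ j : ℤ, j < j' → sharedCard (surgery N D j') j = sharedCard D j := by
    intro j hj
    unfold sharedCard
    have hset : (surgery N D j').filter (fun bb => bb.2 = j ∧ (bb.1, j + 1) ∈ surgery N D j')
        = D.filter (fun bb => bb.2 = j ∧ (bb.1, j + 1) ∈ D) := by
      ext ⟨x, y⟩
      simp only [Finset.mem_filter]
      constructor
      · rintro ⟨hx, rfl, hx1⟩
        rw [hmem] at hx hx1
        rcases hx with ⟨h1, h2⟩ | ⟨h1, _⟩ | ⟨h1, _⟩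
        · rcases hx1 with ⟨g1, g2⟩ | ⟨g1, g2, g3⟩ | ⟨g1, _⟩
          · exact ⟨h2, rfl, g2⟩
          · have := row_ge_top hD hc0 (by omega : y ≤ j') h2
            omega
          · omega
        · omega
        · omega
      · rintro ⟨hx, rfl, hx1⟩
        exact ⟨(hmem x y).2 (Or.inl ⟨by omega, hx⟩), rfl,
          (hmem x (y + 1)).2 (Or.inl ⟨by omega, hx1⟩)⟩
    rw [hset]
  -- shared cards at and beyond j' are the old ones shifted
  have hshlt : ∀ j : ℤ, j' ≤ j → sharedCard (surgery N D j') j = sharedCard D (j + 1) := by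
    intro j hj
    unfold sharedCard
    apply Finset.card_bij (fun bb _ => (bb.1 + 1, bb.2 + 1))
    · rintro ⟨x, y⟩ hb0
      simp only [Finset.mem_filter] at hb0 ⊢
      obtain ⟨hxS, rfl, hx1S⟩ := hb0
      rw [hmem] at hxS hx1S
      have hx2 : (x + 1, y + 1 + 1) ∈ D := by
        rcases hx1S with ⟨g1, _⟩ | ⟨g1, _, _⟩ | ⟨g1, g2⟩
        · exact absurd g1 (by omega)
        · exact absurd g1 (by omega)
        · exact g2
      have hxb' : x + 1 ≤ b' := row_le_bot hD hc1 (by omega) hx2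
      have hx1 : (x + 1, y + 1) ∈ D := by
        rcases hxS with ⟨g1, g2⟩ | ⟨g1, g2, g3⟩ | ⟨g1, g2⟩
        · have hy : y = j' := by omega
          have ht_le : t ≤ x := ht_min x (by rwa [hy] at g2)
          have : (x + 1, j' + 1) ∈ D := (hcolj1 (x + 1)).2 ⟨by omega, by omega⟩
          rwa [hy]
        · have : (x + 1, j' + 1) ∈ D := (hcolj1 (x + 1)).2 ⟨by omega, by omega⟩
          rwa [g1]
        · exact g2
      exact ⟨hx1, rfl, hx2⟩
    · rintro ⟨x1, y1⟩ h1 ⟨x2, y2⟩ h2 h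
      rw [Prod.mk.injEq] at h ⊢
      omega
    · rintro ⟨x, y⟩ hb0
      simp only [Finset.mem_filter] at hb0
      obtain ⟨hxD, rfl, hx1D⟩ := hb0
      refine ⟨(x - 1, j), ?_, by rw [Prod.mk.injEq]; omega⟩
      simp only [Finset.mem_filter]
      have hm1 : (x - 1, j) ∈ surgery N D j' := by
        rw [hmem]
        rcases eq_or_lt_of_le hj with rfl | hjgt
        · have hsx : s ≤ x := hs_min x hxD
          have hxb'2 : x ≤ b' := hb'_max x hxD
          rcases lt_or_ge (x - 1) t with h | h
          · exact Or.inr (Or.inl ⟨rfl, by omega, by omega⟩)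
          · exact Or.inl ⟨le_rfl, (hcolj' (x - 1)).2 ⟨h, by omega⟩⟩
        · exact Or.inr (Or.inr ⟨hjgt, by rwa [show x - 1 + 1 = x by ring]⟩)
      have hm2 : (x - 1, j + 1) ∈ surgery N D j' := by
        rw [hmem]
        exact Or.inr (Or.inr ⟨by omega, by rwa [show x - 1 + 1 = x by ring]⟩)
      exact ⟨hm1, by trivial, hm2⟩
  have hsuper' : IsSuper N (surgery N D j') := by
    intro j
    rcases le_or_gt j' j with h | h
    · rw [hshlt j h]; exact le_of_lt (hmax (j + 1) (by omega))
    · rw [hsheq j h]; exact hsuper j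
  -- column count
  have himg : (surgery N D j').image Prod.snd
      = (D.image Prod.snd).filter (fun j => j ≤ j')
        ∪ ((D.image Prod.snd).filter (fun j => j' + 1 < j)).image (fun j => j - 1) := by
    ext j
    simp only [Finset.mem_image, Finset.mem_union, Finset.mem_filter]
    constructor
    · rintro ⟨⟨x, y⟩, hxy, rfl⟩
      rw [hmem] at hxy
      rcases hxy with ⟨h1, h2⟩ | ⟨h1, _⟩ | ⟨h1, h2⟩
      · exact Or.inl ⟨⟨(x, y), h2, rfl⟩, h1⟩
      · exact Or.inl ⟨⟨(t, j'), ht_mem, h1.symm⟩, le_of_eq h1⟩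
      · exact Or.inr ⟨y + 1, ⟨⟨(x + 1, y + 1), h2, rfl⟩, by omega⟩, by omega⟩
    · rintro (⟨⟨⟨x, y⟩, hxy, rfl⟩, hle⟩ | ⟨z, ⟨⟨⟨x, y⟩, hxy, rfl⟩, hgt⟩, rfl⟩)
      · exact ⟨(x, y), (hmem x y).2 (Or.inl ⟨hle, hxy⟩), rfl⟩
      · refine ⟨(x - 1, y - 1), (hmem (x - 1) (y - 1)).2 (Or.inr (Or.inr ⟨by omega, ?_⟩)), rfl⟩
        rwa [show x - 1 + 1 = x by ring, show y - 1 + 1 = y by ring]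
  have hcount_cols : ((surgery N D j').image Prod.snd).card + 1 = (D.image Prod.snd).card := by
    set E := D.image Prod.snd with hE
    have hdisj : Disjoint (E.filter (fun j => j ≤ j'))
        ((E.filter (fun j => j' + 1 < j)).image (fun j => j - 1)) := by
      rw [Finset.disjoint_left]
      intro x hx hx2
      simp only [Finset.mem_filter, Finset.mem_image] at hx hx2
      obtain ⟨z, ⟨_, hz⟩, rfl⟩ := hx2
      omega
    rw [himg, Finset.card_union_of_disjoint hdisj,
      Finset.card_image_of_injective _ (fun a b h => by omega)]
    have hsplit := Finset.card_filter_add_card_filter_not (s := E) (p := fun j => j ≤ j')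
    have hins : E.filter (fun j => ¬ j ≤ j') = insert (j' + 1) (E.filter (fun j => j' + 1 < j)) := by
      ext z
      simp only [Finset.mem_filter, Finset.mem_insert]
      constructor
      · rintro ⟨hz, h⟩
        rcases eq_or_lt_of_le (by omega : j' + 1 ≤ z) with h2 | h2
        · exact Or.inl h2.symm
        · exact Or.inr ⟨hz, h2⟩
      · rintro (rfl | ⟨hz, h2⟩)
        · exact ⟨Finset.mem_image.2 ⟨(s, j' + 1), hs_mem, rfl⟩, by omega⟩
        · exact ⟨hz, by omega⟩
    have hnotmem : j' + 1 ∉ E.filter (fun j => j' + 1 < j) := by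
      intro hcon
      simp only [Finset.mem_filter] at hcon
      omega
    rw [hins, Finset.card_insert_of_notMem hnotmem] at hsplit
    omega
  -- box count
  have hcount_box : (surgery N D j').card + (2 * N - 1) = D.card := by
    have hdisj1 : Disjoint (D.filter (fun bb => bb.2 ≤ j'))
        ((Finset.Icc 1 K).image (fun r : ℕ => (topBox D j' - (r : ℤ), j'))) := by
      rw [Finset.disjoint_left]
      rintro ⟨x, y⟩ hx hx2
      simp only [Finset.mem_filter] at hx
      simp only [Finset.mem_image, Finset.mem_Icc, htop] at hx2
      obtain ⟨r, ⟨hr1, hr2⟩, heq⟩ := hx2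
      rw [Prod.mk.injEq] at heq
      obtain ⟨he1, he2⟩ := heq
      have hmem' : (x, j') ∈ D := by rw [he2]; exact hx.1
      have := ht_min x hmem'
      omega
    have hdisj2 : Disjoint (D.filter (fun bb => bb.2 ≤ j') ∪
        (Finset.Icc 1 K).image (fun r : ℕ => (topBox D j' - (r : ℤ), j')))
        ((D.filter (fun bb => j' + 1 < bb.2)).image (fun bb => (bb.1 - 1, bb.2 - 1))) := by
      rw [Finset.disjoint_left]
      rintro ⟨x, y⟩ hx hx2
      simp only [Finset.mem_union, Finset.mem_filter, Finset.mem_image, Finset.mem_Icc] at hx hx2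
      obtain ⟨⟨a, bb⟩, ⟨_, hgt⟩, heq⟩ := hx2
      rw [Prod.mk.injEq] at heq
      obtain ⟨he1, he2⟩ := heq
      rcases hx with ⟨_, h⟩ | ⟨r, _, heq2⟩
      · omega
      · rw [Prod.mk.injEq] at heq2
        obtain ⟨_, hg2⟩ := heq2
        omega
    have hcB : ((Finset.Icc 1 K).image (fun r : ℕ => (topBox D j' - (r : ℤ), j'))).card = K := by
      rw [Finset.card_image_of_injective _ (fun r1 r2 h => by
        rw [Prod.mk.injEq] at h
        omega), Nat.card_Icc]
      omega
    have hcC : ((D.filter (fun bb => j' + 1 < bb.2)).image (fun bb => (bb.1 - 1, bb.2 - 1))).card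
        = (D.filter (fun bb => j' + 1 < bb.2)).card :=
      Finset.card_image_of_injective _ (fun p1 p2 h => by
        obtain ⟨a, c⟩ := p1
        obtain ⟨e, f⟩ := p2
        rw [Prod.mk.injEq] at h ⊢
        omega)
    have hcards : (surgery N D j').card = (D.filter (fun bb => bb.2 ≤ j')).card + K
        + (D.filter (fun bb => j' + 1 < bb.2)).card := by
      rw [surgery, ← hK_def, Finset.card_union_of_disjoint hdisj2,
        Finset.card_union_of_disjoint hdisj1, hcB, hcC]
    have hsplitD := Finset.card_filter_add_card_filter_not (s := D)
      (p := fun bb => bb.2 ≤ j')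
    have hFsplit : (D.filter (fun bb => ¬ bb.2 ≤ j'))
        = D.filter (fun bb => bb.2 = j' + 1) ∪ D.filter (fun bb => j' + 1 < bb.2) := by
      ext ⟨x, y⟩
      simp only [Finset.mem_filter, Finset.mem_union]
      constructor
      · rintro ⟨hx, h⟩
        rcases eq_or_lt_of_le (by omega : j' + 1 ≤ y) with h2 | h2
        · exact Or.inl ⟨hx, h2.symm⟩
        · exact Or.inr ⟨hx, h2⟩
      · rintro (⟨hx, h⟩ | ⟨hx, h⟩) <;> exact ⟨hx, by omega⟩
    have hdisjF : Disjoint (D.filter (fun bb => bb.2 = j' + 1))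
        (D.filter (fun bb => j' + 1 < bb.2)) := by
      rw [Finset.disjoint_left]
      rintro ⟨x, y⟩ h1 h2
      simp only [Finset.mem_filter] at h1 h2
      omega
    have hcol1card : (D.filter (fun bb => bb.2 = j' + 1)).card = colLen D (j' + 1) := by
      rw [colLen, col]
      exact (Finset.card_image_of_injOn (fun p hp q hq h => by
        simp only [Finset.mem_coe, Finset.mem_filter] at hp hq
        exact Prod.ext h (hp.2.trans hq.2.symm))).symm
    have h2 : (D.filter (fun bb => ¬ bb.2 ≤ j')).card
        = colLen D (j' + 1) + (D.filter (fun bb => j' + 1 < bb.2)).card := by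
      rw [hFsplit, Finset.card_union_of_disjoint hdisjF, hcol1card]
    omega
  -- non-generic columns
  have hj'mem : j' ∈ nonGenCols N D := by
    simp only [nonGenCols, Finset.mem_filter, Finset.mem_image]
    exact ⟨⟨(t, j'), ht_mem, rfl⟩, hng⟩
  have hng' : nonGenCols N (surgery N D j') = (nonGenCols N D).erase j' := by
    ext j
    simp only [nonGenCols, Finset.mem_filter, Finset.mem_image, Finset.mem_erase]
    constructor
    · rintro ⟨⟨⟨x, y⟩, hxy, rfl⟩, hsh⟩
      have hylt : y < j' := by
        by_contra h
        push_neg at h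
        rw [hshlt y h] at hsh
        have := hmax (y + 1) (by omega)
        omega
      rw [hsheq y hylt] at hsh
      have hyD : (x, y) ∈ D := by
        rw [hmem] at hxy
        rcases hxy with ⟨_, h⟩ | ⟨h, _⟩ | ⟨h, _⟩
        · exact h
        · omega
        · omega
      exact ⟨by omega, ⟨(x, y), hyD, rfl⟩, hsh⟩
    · rintro ⟨hne, ⟨⟨x, y⟩, hxy, rfl⟩, hsh⟩
      have hne' : y ≠ j' := hne
      have hsh' : sharedCard D y = 2 * N := hsh
      have hylt : y < j' := by
        rcases lt_trichotomy y j' with h | h | h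
        · exact h
        · exact absurd h hne'
        · have := hmax y h
          omega
      refine ⟨⟨(x, y), (hmem x y).2 (Or.inl ⟨by omega, hxy⟩), rfl⟩, ?_⟩
      rw [hsheq y hylt]
      exact hsh'
  have hcount_ng : (nonGenCols N (surgery N D j')).card + 1 = (nonGenCols N D).card := by
    rw [hng', Finset.card_erase_of_mem hj'mem]
    have := Finset.card_pos.2 ⟨j', hj'mem⟩
    omega
  exact ⟨hskew, hsuper', hcount_cols, hcount_box, hcount_ng⟩
end
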